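/- Let x_k and x be measurable functions (on a finite measure space) with distribution functions n_{x_k}(z) = μ{|x_k| > z} and n_x(z) = μ{|x| > z}. If n_{x_k}(z) → n_x(z) for every z > 0 as k → ∞, then the decreasing left-continuous rearrangements satisfy x_k*(t) → x*(t) at every point t where x* is continuous. -/

import Mathlib

open MeasureTheory Filter

/-- Distribution function `n_f(z) = μ{ω : |f ω| > z}`. -/
noncomputable def distrib {α : Type*} [MeasurableSpace α] (μ : Measure α)
    (f : α → ℝ) (z : ℝ) : ENNReal :=
  μ {ω | z < |f ω|}

/-- Decreasing left-continuous rearrangement `f*(t) = inf{z > 0 : n_f(z) < t}`. -/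
noncomputable def rearr {α : Type*} [MeasurableSpace α] (μ : Measure α)
    (f : α → ℝ) (t : ℝ) : ℝ :=
  sInf {z : ℝ | 0 < z ∧ distrib μ f z < ENNReal.ofReal t}

lemma distrib_anti {α : Type*} [MeasurableSpace α] (μ : Measure α) (f : α → ℝ) :
    Antitone (distrib μ f) :=
  fun _ _ hab => measure_mono (fun _ hω => lt_of_le_of_lt hab hω)

lemma rearr_nonneg {α : Type*} [MeasurableSpace α] (μ : Measure α) (f : α → ℝ) (t : ℝ) :
    0 ≤ rearr μ f t :=
  Real.sInf_nonneg (fun _ hz => hz.1.le)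

lemma rearr_set_bddBelow {α : Type*} [MeasurableSpace α] (μ : Measure α) (f : α → ℝ) (t : ℝ) :
    BddBelow {z : ℝ | 0 < z ∧ distrib μ f z < ENNReal.ofReal t} :=
  ⟨0, fun _ hz => hz.1.le⟩

lemma rearr_set_nonempty {α : Type*} [MeasurableSpace α] (μ : Measure α) [IsFiniteMeasure μ]
    {f : α → ℝ} (hf : Measurable f) {t : ℝ} (ht : 0 < t) :
    {z : ℝ | 0 < z ∧ distrib μ f z < ENNReal.ofReal t}.Nonempty := by
  have hmeas : ∀ m : ℕ, NullMeasurableSet {ω | (m : ℝ) + 1 < |f ω|} μ :=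
    fun m => ((measurableSet_lt measurable_const hf.abs)).nullMeasurableSet
  have hanti : Antitone (fun m : ℕ => {ω | (m : ℝ) + 1 < |f ω|}) := by
    intro a b hab ω hω
    simp only [Set.mem_setOf_eq] at *
    have : (a : ℝ) ≤ b := Nat.cast_le.2 hab
    linarith
  have hempty : ⋂ m : ℕ, {ω | (m : ℝ) + 1 < |f ω|} = (∅ : Set α) := by
    ext ω
    simp only [Set.mem_iInter, Set.mem_setOf_eq, Set.mem_empty_iff_false, iff_false, not_forall,
      not_lt]
    exact ⟨⌈|f ω|⌉₊, by
      have := Nat.le_ceil |f ω|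
      linarith⟩
  have htend : Tendsto (fun m : ℕ => distrib μ f ((m : ℝ) + 1)) atTop (nhds 0) := by
    have := tendsto_measure_iInter_atTop (μ := μ) hmeas hanti ⟨0, measure_ne_top μ _⟩
    rw [hempty] at this
    rw [measure_empty] at this
    exact this
  have hev : ∀ᶠ m : ℕ in atTop, distrib μ f ((m : ℝ) + 1) < ENNReal.ofReal t :=
    htend.eventually_lt_const (by simpa using ht)
  obtain ⟨m, hm⟩ := hev.exists
  exact ⟨(m : ℝ) + 1, by positivity, hm⟩

theorem rearrangement_convergence {α : Type*} [MeasurableSpace α] (μ : Measure α)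
    [IsFiniteMeasure μ] (x : ℕ → α → ℝ) (xlim : α → ℝ)
    (hx : ∀ k, Measurable (x k)) (hxlim : Measurable xlim)
    (hconv : ∀ z : ℝ, 0 < z →
      Tendsto (fun k => distrib μ (x k) z) atTop (nhds (distrib μ xlim z)))
    (t : ℝ) (ht : ContinuousAt (rearr μ xlim) t) :
    Tendsto (fun k => rearr μ (x k) t) atTop (nhds (rearr μ xlim t)) := by
  rcases le_or_gt t 0 with htle | htpos
  · -- for t ≤ 0 all rearrangements are 0
    have hzero : ∀ f : α → ℝ, rearr μ f t = 0 := by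
      intro f
      have : {z : ℝ | 0 < z ∧ distrib μ f z < ENNReal.ofReal t} = ∅ := by
        ext z
        simp only [Set.mem_setOf_eq, Set.mem_empty_iff_false, iff_false, not_and, not_lt]
        intro _
        simp [ENNReal.ofReal_eq_zero.2 htle]
      rw [rearr, this, Real.sInf_empty]
    simp only [hzero]
    exact tendsto_const_nhds
  · rw [Metric.tendsto_nhds]
    intro ε hε
    set g := rearr μ xlim t with hg
    -- upper bound: eventually rearr μ (x k) t ≤ g + ε/2
    have hz1pos : (0:ℝ) < g + ε / 2 := by
      have := rearr_nonneg μ xlim t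
      positivity
    have hS : {z : ℝ | 0 < z ∧ distrib μ xlim z < ENNReal.ofReal t}.Nonempty :=
      rearr_set_nonempty μ hxlim htpos
    have hlt : g < g + ε / 2 := by linarith
    obtain ⟨z', hz'mem, hz'lt⟩ := (csInf_lt_iff (rearr_set_bddBelow μ xlim t) hS).1 hlt
    have hdlt : distrib μ xlim (g + ε / 2) < ENNReal.ofReal t :=
      lt_of_le_of_lt (distrib_anti μ xlim hz'lt.le) hz'mem.2
    have hub : ∀ᶠ k in atTop, rearr μ (x k) t < g + ε := by
      filter_upwards [(hconv _ hz1pos).eventually_lt_const hdlt] with k hk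
      have hmem : (g + ε / 2) ∈ {z : ℝ | 0 < z ∧ distrib μ (x k) z < ENNReal.ofReal t} :=
        ⟨hz1pos, hk⟩
      have := csInf_le (rearr_set_bddBelow μ (x k) t) hmem
      calc rearr μ (x k) t ≤ g + ε / 2 := this
        _ < g + ε := by linarith
    -- lower bound
    have hlb : ∀ᶠ k in atTop, g - ε < rearr μ (x k) t := by
      rcases lt_or_ge (g - ε) 0 with hneg | hge0
      · exact Eventually.of_forall fun k => lt_of_lt_of_le hneg (rearr_nonneg μ (x k) t)
      · -- use continuity to find t' > t with rearr μ xlim t' > g - ε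
        obtain ⟨δ, hδpos, hδ⟩ := Metric.continuousAt_iff.1 ht ε hε
        set t' := t + δ / 2 with ht'
        have ht'gt : t < t' := by simp [ht']; linarith
        have hdist : dist t' t < δ := by
          rw [Real.dist_eq, ht', show t + δ / 2 - t = δ / 2 by ring,
            abs_of_pos (half_pos hδpos)]
          linarith
        have hclose := hδ hdist
        rw [Real.dist_eq] at hclose
        have hgt' : g - ε < rearr μ xlim t' := by
          have := abs_lt.1 hclose
          linarith [this.1]
        -- pick z with g - ε < z < rearr μ xlim t'
        obtain ⟨z, hz1, hz2⟩ := exists_between hgt'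
        have hzpos : 0 < z := lt_of_le_of_lt hge0 hz1
        -- z is not in the t' set, so distrib μ xlim z ≥ ofReal t' > ofReal t
        have hznotmem : z ∉ {w : ℝ | 0 < w ∧ distrib μ xlim w < ENNReal.ofReal t'} := by
          intro hm
          exact absurd (csInf_le (rearr_set_bddBelow μ xlim t') hm) (not_le.2 hz2)
        have hzge : ENNReal.ofReal t' ≤ distrib μ xlim z := by
          by_contra hcon
          exact hznotmem ⟨hzpos, not_le.1 hcon⟩
        have hstrict : ENNReal.ofReal t < distrib μ xlim z :=
          lt_of_lt_of_le (by
            rw [ENNReal.ofReal_lt_ofReal_iff (lt_trans htpos ht'gt)]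
            exact ht'gt) hzge
        filter_upwards [(hconv z hzpos).eventually_const_lt hstrict] with k hk
        -- now z is a lower bound of the k-set
        have hlbz : z ≤ rearr μ (x k) t := by
          apply le_csInf (rearr_set_nonempty μ (hx k) htpos)
          intro w hw
          by_contra hcon
          push_neg at hcon
          exact absurd (lt_of_le_of_lt (distrib_anti μ (x k) hcon.le) hw.2) (not_lt.2 hk.le)
        linarith
    filter_upwards [hub.and hlb] with k hk
    rw [Real.dist_eq, abs_lt]
    constructor <;> [linarith [hk.2]; linarith [hk.1]]
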